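/- (Proposition 3.2, Lipschitz estimate for the derivative, case k = 1, stated without tensor products.) Let A be a unital C*-algebra over ℂ and let μ be a finite complex Borel measure on ℝ with ∫_ℝ (1 + |ξ| + ξ²) d|μ|(ξ) < ∞. Then for all self-adjoint X, Y, Z ∈ A, ‖ df_μ(X)(Z) − df_μ(Y)(Z) ‖ ≤ (∫_ℝ ξ² d|μ|(ξ)) · ‖X − Y‖ · ‖Z‖, where df_μ(X)(Z) = ∫_0^1 ∫_ℝ iξ · exp(iαξX) · Z · exp(i(1−α)ξX) dμ(ξ) dα is the Fréchet derivative of f_μ at X in direction Z. -/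

import Mathlib

open MeasureTheory

/-- `exp(i t X)` in a complex Banach algebra, for `t : ℝ`. -/
noncomputable def uexp {A : Type*} [NormedRing A] [NormedAlgebra ℂ A]
    (t : ℝ) (X : A) : A :=
  NormedSpace.exp ((Complex.I * (t : ℂ)) • X)

/-- `f_μ(X) := ∫_ℝ exp(iξX) dμ(ξ)` (Bochner integral in `A`), for a finite complex
Borel measure `μ` on `ℝ` represented by its total variation `ν = |μ|` together with a
unimodular density `ρ` (so that `dμ = ρ dν`). -/
noncomputable def fmu {A : Type*} [NormedRing A] [NormedAlgebra ℂ A] [CompleteSpace A]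
    (ν : Measure ℝ) (ρ : ℝ → ℂ) (X : A) : A :=
  ∫ ξ, ρ ξ • uexp ξ X ∂ν

/-- The first-derivative formula
`df_μ(X)(Y) = ∫₀¹ ∫_ℝ iξ exp(iαξX) Y exp(i(1−α)ξX) dμ(ξ) dα`. -/
noncomputable def dfmu {A : Type*} [NormedRing A] [NormedAlgebra ℂ A] [CompleteSpace A]
    (ν : Measure ℝ) (ρ : ℝ → ℂ) (X Y : A) : A :=
  ∫ α in (0 : ℝ)..1,
    ∫ ξ, (ρ ξ * (ξ : ℂ) * Complex.I) •
      (uexp (α * ξ) X * Y * uexp ((1 - α) * ξ) X) ∂ν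

section Helpers
open Complex NormedSpace
variable {A : Type*} [CStarAlgebra A]

lemma real_smul_eq (t : ℝ) (X : A) : t • X = (t : ℂ) • X := by
  rw [← algebraMap_smul ℂ t X, Complex.coe_algebraMap]

lemma uexp_eq_smul (t : ℝ) (X : A) : uexp t X = exp (t • (Complex.I • X)) := by
  rw [uexp]; congr 1; rw [real_smul_eq, smul_smul, mul_comm]

lemma uexp_eq_smul' (t : ℝ) (X : A) : uexp t X = exp (Complex.I • (t • X)) := by
  rw [uexp_eq_smul, smul_comm]

lemma uexp_mem_unitary {X : A} (hX : IsSelfAdjoint X) (t : ℝ) : uexp t X ∈ unitary A := by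
  have : uexp t X = (selfAdjoint.expUnitary (t • ⟨X, hX⟩) : A) := by
    rw [selfAdjoint.expUnitary_coe, uexp_eq_smul']; rfl
  rw [this]; exact (selfAdjoint.expUnitary _).2

lemma norm_uexp_le {X : A} (hX : IsSelfAdjoint X) (t : ℝ) : ‖uexp t X‖ ≤ 1 := by
  rcases subsingleton_or_nontrivial A with h | h
  · simp [Subsingleton.elim (uexp t X) 0]
  · exact le_of_eq (CStarRing.norm_of_mem_unitary (uexp_mem_unitary hX t))

lemma uexp_add (s t : ℝ) (X : A) : uexp (s + t) X = uexp s X * uexp t X := by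
  letI : NormedAlgebra ℚ A := .restrictScalars ℚ ℂ A
  rw [uexp, uexp, uexp]
  rw [← exp_add_of_commute (Commute.smul_left (Commute.smul_right (Commute.refl X) _) _)]
  congr 1
  rw [← add_smul]
  push_cast
  ring_nf

lemma uexp_zero (X : A) : uexp 0 X = 1 := by simp [uexp, exp_zero]

lemma continuous_uexp (X : A) : Continuous fun t : ℝ => uexp t X := by
  letI : NormedAlgebra ℚ A := .restrictScalars ℚ ℂ A
  exact (exp_continuous).comp (by fun_prop)

lemma hasDerivAt_uexp (X : A) (t : ℝ) :
    HasDerivAt (fun s : ℝ => uexp s X) (uexp t X * (Complex.I • X)) t := by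
  have h := hasDerivAt_exp_smul_const (𝕂 := ℝ) (Complex.I • X) t
  simpa [← uexp_eq_smul] using h

lemma hasDerivAt_uexp_neg (X : A) (t : ℝ) :
    HasDerivAt (fun s : ℝ => uexp (-s) X)
      (uexp (-t) X * (-(Complex.I • X))) t := by
  have h := hasDerivAt_exp_smul_const (𝕂 := ℝ) (-(Complex.I • X)) t
  have he : ∀ u : ℝ, exp (u • -(Complex.I • X)) = uexp (-u) X := by
    intro u; rw [uexp_eq_smul, smul_neg, neg_smul]
  simp only [he] at h
  exact h

lemma uexp_lipschitz {X Y : A} (hX : IsSelfAdjoint X) (hY : IsSelfAdjoint Y) (t : ℝ) :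
    ‖uexp t X - uexp t Y‖ ≤ |t| * ‖X - Y‖ := by
  set g : ℝ → A := fun s => uexp (-s) X * uexp s Y with hg
  have hderiv : ∀ s : ℝ, HasDerivAt g
      (uexp (-s) X * (Complex.I • (Y - X)) * uexp s Y) s := by
    intro s
    have h1 := hasDerivAt_uexp_neg X s
    have h2 := hasDerivAt_uexp Y s
    have := h1.mul h2
    convert this using 1
    · rfl
    have hc : uexp s Y * (Complex.I • Y) = (Complex.I • Y) * uexp s Y := by
      rw [uexp_eq_smul]
      exact (((Commute.refl (Complex.I • Y)).smul_left (s:ℝ)).exp_left).eq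
    rw [smul_sub, mul_sub, sub_mul, hc]
    noncomm_ring
  have hbound : ∀ s ∈ Set.univ, ‖uexp (-s) X * (Complex.I • (Y - X)) * uexp s Y‖ ≤ ‖X - Y‖ := by
    intro s _
    calc ‖uexp (-s) X * (Complex.I • (Y - X)) * uexp s Y‖
        ≤ ‖uexp (-s) X * (Complex.I • (Y - X))‖ * ‖uexp s Y‖ := norm_mul_le _ _
      _ ≤ ‖uexp (-s) X‖ * ‖Complex.I • (Y - X)‖ * ‖uexp s Y‖ := by
          gcongr; exact norm_mul_le _ _
      _ ≤ 1 * ‖Complex.I • (Y - X)‖ * 1 := by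
          gcongr
          · exact norm_uexp_le hX _
          · exact norm_uexp_le hY _
      _ = ‖X - Y‖ := by
          rw [one_mul, mul_one, norm_smul, Complex.norm_I, one_mul, norm_sub_rev]
  have hmvt := Convex.norm_image_sub_le_of_norm_hasDerivWithin_le
    (f := g) (C := ‖X - Y‖)
    (fun s _ => (hderiv s).hasDerivWithinAt) hbound convex_univ
    (Set.mem_univ (0:ℝ)) (Set.mem_univ t)
  have hg0 : g 0 = 1 := by simp [hg, uexp_zero]
  have key : ‖g t - g 0‖ ≤ ‖X - Y‖ * |t| := by simpa using hmvt
  have hfact : uexp t X - uexp t Y = uexp t X * (g 0 - g t) := by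
    rw [hg0, mul_sub, mul_one]
    congr 1
    rw [hg, ← mul_assoc, ← uexp_add]
    simp [uexp_zero]
  rw [hfact]
  calc ‖uexp t X * (g 0 - g t)‖ ≤ ‖uexp t X‖ * ‖g 0 - g t‖ := norm_mul_le _ _
    _ ≤ 1 * (‖X - Y‖ * |t|) := by
        gcongr
        · exact norm_uexp_le hX _
        · rw [norm_sub_rev]; exact key
    _ = |t| * ‖X - Y‖ := by ring

end Helpers

/-- Proposition 3.2, Lipschitz estimate for the derivative, case
`k = 1`. Let `A` be a unital C*-algebra over `ℂ` and `μ` a finite complex Borel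
measure on `ℝ` (given by its total variation `ν` and unimodular density `ρ`) with
`∫ (1+|ξ|+ξ²) d|μ|(ξ) < ∞`. Then for all self-adjoint `X, Y, Z ∈ A`,
`‖df_μ(X)(Z) − df_μ(Y)(Z)‖ ≤ (∫ ξ² d|μ|(ξ)) ‖X − Y‖ ‖Z‖`, where
`df_μ(X)(Z) = ∫₀¹ ∫_ℝ iξ exp(iαξX) Z exp(i(1−α)ξX) dμ(ξ) dα` is the Fréchet
derivative of `f_μ` at `X` in direction `Z`. -/
theorem dfmu_lipschitz {A : Type*} [CStarAlgebra A]
    (ν : Measure ℝ) [IsFiniteMeasure ν]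
    (ρ : ℝ → ℂ) (hρm : Measurable ρ) (hρ1 : ∀ ξ, ‖ρ ξ‖ = 1)
    (hint1 : Integrable (fun ξ : ℝ => ξ) ν)
    (hint2 : Integrable (fun ξ : ℝ => ξ ^ 2) ν)
    (X Y Z : A) (hX : IsSelfAdjoint X) (hY : IsSelfAdjoint Y)
    (hZ : IsSelfAdjoint Z) :
    ‖dfmu ν ρ X Z - dfmu ν ρ Y Z‖ ≤ (∫ ξ, ξ ^ 2 ∂ν) * ‖X - Y‖ * ‖Z‖ := by
  set F : A → ℝ → ℝ → A := fun W α ξ =>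
    (ρ ξ * (ξ : ℂ) * Complex.I) • (uexp (α * ξ) W * Z * uexp ((1 - α) * ξ) W) with hF
  have hnormc : ∀ ξ : ℝ, ‖ρ ξ * (ξ : ℂ) * Complex.I‖ = |ξ| := by
    intro ξ
    rw [norm_mul, norm_mul, hρ1, Complex.norm_I, Complex.norm_real, Real.norm_eq_abs,
      one_mul, mul_one]
  -- measurability in ξ
  have hmeas : ∀ (W : A) (α : ℝ), AEStronglyMeasurable (F W α) ν := by
    intro W α
    apply AEStronglyMeasurable.smul
    · exact ((hρm.mul (Complex.measurable_ofReal)).mul measurable_const).aestronglyMeasurable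
    · apply Continuous.aestronglyMeasurable
      exact (((continuous_uexp W).comp (continuous_const.mul continuous_id)).mul
        continuous_const).mul ((continuous_uexp W).comp (continuous_const.mul continuous_id))
  -- norm bound on F W α ξ for selfadjoint W
  have hFnorm : ∀ (W : A), IsSelfAdjoint W → ∀ (α ξ : ℝ), ‖F W α ξ‖ ≤ |ξ| * ‖Z‖ := by
    intro W hW α ξ
    rw [hF, norm_smul, hnormc]
    gcongr
    calc ‖uexp (α * ξ) W * Z * uexp ((1 - α) * ξ) W‖
        ≤ ‖uexp (α * ξ) W * Z‖ * ‖uexp ((1 - α) * ξ) W‖ := norm_mul_le _ _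
      _ ≤ ‖uexp (α * ξ) W‖ * ‖Z‖ * ‖uexp ((1 - α) * ξ) W‖ := by gcongr; exact norm_mul_le _ _
      _ ≤ 1 * ‖Z‖ * 1 := by
          gcongr
          · exact norm_uexp_le hW _
          · exact norm_uexp_le hW _
      _ = ‖Z‖ := by ring
  have hboundInt : Integrable (fun ξ : ℝ => |ξ| * ‖Z‖) ν := hint1.abs.mul_const _
  have hFint : ∀ (W : A), IsSelfAdjoint W → ∀ α : ℝ, Integrable (F W α) ν := by
    intro W hW α
    exact (hboundInt.mono' (hmeas W α)
      (Filter.Eventually.of_forall fun ξ => hFnorm W hW α ξ))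
  -- continuity of inner integral in α, hence interval integrability
  have hcont : ∀ (W : A), IsSelfAdjoint W →
      Continuous fun α : ℝ => ∫ ξ, F W α ξ ∂ν := by
    intro W hW
    apply continuous_of_dominated (fun α => hmeas W α)
      (fun α => Filter.Eventually.of_forall fun ξ => hFnorm W hW α ξ) hboundInt
    refine Filter.Eventually.of_forall fun ξ => ?_
    apply Continuous.smul continuous_const
    exact (((continuous_uexp W).comp (continuous_id.mul continuous_const)).mul
      continuous_const).mul ((continuous_uexp W).comp ((continuous_const.sub
        continuous_id).mul continuous_const))
  have hII : ∀ (W : A), IsSelfAdjoint W →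
      IntervalIntegrable (fun α => ∫ ξ, F W α ξ ∂ν) volume 0 1 := fun W hW =>
    (hcont W hW).intervalIntegrable 0 1
  -- the difference as a single interval integral
  have hsplit : dfmu ν ρ X Z - dfmu ν ρ Y Z
      = ∫ α in (0:ℝ)..1, ((∫ ξ, F X α ξ ∂ν) - ∫ ξ, F Y α ξ ∂ν) := by
    rw [dfmu, dfmu, ← intervalIntegral.integral_sub (hII X hX) (hII Y hY)]
  rw [hsplit]
  -- bound the inner difference for α ∈ [0,1]
  have hkey : ∀ α ∈ Set.Icc (0:ℝ) 1,
      ‖(∫ ξ, F X α ξ ∂ν) - ∫ ξ, F Y α ξ ∂ν‖ ≤ (∫ ξ, ξ ^ 2 ∂ν) * ‖X - Y‖ * ‖Z‖ := by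
    intro α hα
    rw [← integral_sub (hFint X hX α) (hFint Y hY α)]
    have hbnd : Integrable (fun ξ : ℝ => ξ ^ 2 * ‖X - Y‖ * ‖Z‖) ν :=
      (hint2.mul_const _).mul_const _
    have hle : ∀ ξ : ℝ, ‖F X α ξ - F Y α ξ‖ ≤ ξ ^ 2 * ‖X - Y‖ * ‖Z‖ := by
      intro ξ
      rw [hF, ← smul_sub, norm_smul, hnormc]
      have hdec : uexp (α * ξ) X * Z * uexp ((1 - α) * ξ) X
            - uexp (α * ξ) Y * Z * uexp ((1 - α) * ξ) Y
          = (uexp (α * ξ) X - uexp (α * ξ) Y) * Z * uexp ((1 - α) * ξ) X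
            + uexp (α * ξ) Y * Z * (uexp ((1 - α) * ξ) X - uexp ((1 - α) * ξ) Y) := by
        noncomm_ring
      rw [hdec]
      have h1 : ‖(uexp (α * ξ) X - uexp (α * ξ) Y) * Z * uexp ((1 - α) * ξ) X‖
          ≤ (α * |ξ|) * ‖X - Y‖ * ‖Z‖ := by
        calc ‖(uexp (α * ξ) X - uexp (α * ξ) Y) * Z * uexp ((1 - α) * ξ) X‖
            ≤ ‖(uexp (α * ξ) X - uexp (α * ξ) Y) * Z‖ * ‖uexp ((1 - α) * ξ) X‖ :=
              norm_mul_le _ _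
          _ ≤ ‖uexp (α * ξ) X - uexp (α * ξ) Y‖ * ‖Z‖ * 1 := by
              gcongr
              · exact norm_mul_le _ _
              · exact norm_uexp_le hX _
          _ ≤ (|α * ξ| * ‖X - Y‖) * ‖Z‖ * 1 := by
              gcongr; exact uexp_lipschitz hX hY _
          _ = (α * |ξ|) * ‖X - Y‖ * ‖Z‖ := by
              rw [abs_mul, _root_.abs_of_nonneg hα.1]; ring
      have h2 : ‖uexp (α * ξ) Y * Z * (uexp ((1 - α) * ξ) X - uexp ((1 - α) * ξ) Y)‖
          ≤ ((1 - α) * |ξ|) * ‖X - Y‖ * ‖Z‖ := by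
        calc ‖uexp (α * ξ) Y * Z * (uexp ((1 - α) * ξ) X - uexp ((1 - α) * ξ) Y)‖
            ≤ ‖uexp (α * ξ) Y * Z‖ * ‖uexp ((1 - α) * ξ) X - uexp ((1 - α) * ξ) Y‖ :=
              norm_mul_le _ _
          _ ≤ 1 * ‖Z‖ * (|(1 - α) * ξ| * ‖X - Y‖) := by
              gcongr
              · calc ‖uexp (α * ξ) Y * Z‖ ≤ ‖uexp (α * ξ) Y‖ * ‖Z‖ := norm_mul_le _ _
                  _ ≤ 1 * ‖Z‖ := by gcongr; exact norm_uexp_le hY _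
              · exact uexp_lipschitz hX hY _
          _ = ((1 - α) * |ξ|) * ‖X - Y‖ * ‖Z‖ := by
              rw [abs_mul, _root_.abs_of_nonneg (by linarith [hα.2] : (0:ℝ) ≤ 1 - α)]; ring
      calc |ξ| * ‖(uexp (α * ξ) X - uexp (α * ξ) Y) * Z * uexp ((1 - α) * ξ) X
              + uexp (α * ξ) Y * Z * (uexp ((1 - α) * ξ) X - uexp ((1 - α) * ξ) Y)‖
          ≤ |ξ| * ((α * |ξ|) * ‖X - Y‖ * ‖Z‖ + ((1 - α) * |ξ|) * ‖X - Y‖ * ‖Z‖) := by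
            gcongr
            exact (norm_add_le _ _).trans (add_le_add h1 h2)
        _ = |ξ| * |ξ| * ‖X - Y‖ * ‖Z‖ := by ring
        _ = ξ ^ 2 * ‖X - Y‖ * ‖Z‖ := by rw [← _root_.sq_abs ξ]; ring
    refine le_trans (norm_integral_le_of_norm_le hbnd (Filter.Eventually.of_forall hle)) ?_
    rw [integral_mul_const, integral_mul_const]
  have hfin : ‖∫ α in (0:ℝ)..1, ((∫ ξ, F X α ξ ∂ν) - ∫ ξ, F Y α ξ ∂ν)‖
      ≤ ((∫ ξ, ξ ^ 2 ∂ν) * ‖X - Y‖ * ‖Z‖) * |1 - 0| := by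
    apply intervalIntegral.norm_integral_le_of_norm_le_const
    intro α hα
    rw [Set.uIoc_of_le zero_le_one] at hα
    exact hkey α (Set.Ioc_subset_Icc_self hα)
  simpa using hfin
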